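/- Let K ⊆ ℝ^p be a polyhedral convex cone with lineality space L(K) := K ∩ (−K), and let K̂ := K ∩ L(K)^⊥. Then the map Δ defined by Δ(F̂) := F̂ + L(K) is an inclusion-invariant one-to-one map between the set of all faces of K̂ and the set of all faces of K, with inverse Δ⁻¹(F) = F ∩ L(K)^⊥. -/

import Mathlib

open Matrix Set Pointwise

noncomputable section

/-- `cone B = {l • x : l ≥ 0, x ∈ conv B}` -/
def coneOf {E : Type*} [AddCommGroup E] [Module ℝ E] (B : Set E) : Set E :=
  {y | ∃ l : ℝ, 0 ≤ l ∧ ∃ x ∈ convexHull ℝ B, y = l • x}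

/-- `F` is a face of the convex set `B`. -/
def IsFaceOf {E : Type*} [AddCommGroup E] [Module ℝ E] (F B : Set E) : Prop :=
  Convex ℝ F ∧ F ⊆ B ∧
    ∀ y ∈ B, ∀ z ∈ B, ∀ l : ℝ, 0 < l → l < 1 → l • y + (1 - l) • z ∈ F → y ∈ F ∧ z ∈ F

/-- recession cone `0⁺B` of a convex set. -/
def recCone {E : Type*} [AddCommGroup E] [Module ℝ E] (B : Set E) : Set E :=
  {d | ∀ x ∈ B, ∀ t : ℝ, 0 ≤ t → x + t • d ∈ B}

/-- lineality space `L(B) = 0⁺B ∩ (−0⁺B)`. -/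
def linealOf {E : Type*} [AddCommGroup E] [Module ℝ E] (B : Set E) : Set E :=
  recCone B ∩ -recCone B

/-- dimension of (the affine hull of) a set. -/
def sdim {E : Type*} [AddCommGroup E] [Module ℝ E] (B : Set E) : ℕ :=
  Module.finrank ℝ (vectorSpan ℝ B)

def IsPolyhedron {d : ℕ} (B : Set (Fin d → ℝ)) : Prop :=
  ∃ (k : ℕ) (W : Matrix (Fin k) (Fin d) ℝ) (v : Fin k → ℝ), B = {x | v ≤ W.mulVec x}

/-- orthogonal complement (as a set) of a set of vectors. -/
def orthSet {d : ℕ} (L : Set (Fin d → ℝ)) : Set (Fin d → ℝ) :=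
  {y | ∀ z ∈ L, y ⬝ᵥ z = 0}

/-- polar cone `K° = {w : ∀ y ∈ K, wᵀy ≤ 0}`. -/
def polarCone {d : ℕ} (K : Set (Fin d → ℝ)) : Set (Fin d → ℝ) :=
  {w | ∀ y ∈ K, w ⬝ᵥ y ≤ 0}

/-- the last index of `Fin q` (1-based index `q`). -/
def lastIdx (q : ℕ) (hq : 0 < q) : Fin q := ⟨q - 1, by omega⟩

/-- `y ↦ (y,1)`. -/
def lift1 {q : ℕ} (y : Fin q → ℝ) : Fin (q + 1) → ℝ := Fin.snoc y 1

/-- `y ↦ (y,0)`. -/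
def lift0 {q : ℕ} (y : Fin q → ℝ) : Fin (q + 1) → ℝ := Fin.snoc y 0

/-- `p(y) = (y₁,…,y_q)`. -/
def projq {q : ℕ} (y : Fin (q + 1) → ℝ) : Fin q → ℝ := fun i => y i.castSucc

/-- `Φ(B) = cl cone (B × {1})`. -/
def PhiMap {q : ℕ} (B : Set (Fin q → ℝ)) : Set (Fin (q + 1) → ℝ) :=
  closure (coneOf (lift1 '' B))

/-- the block matrix `G = (A; −ZᵀP; 0)`. -/
def Gmat {m n q r : ℕ} (A : Matrix (Fin m) (Fin n) ℝ) (P : Matrix (Fin q) (Fin n) ℝ)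
    (Z : Matrix (Fin q) (Fin r) ℝ) : Matrix (Fin (m + r + 1)) (Fin n) ℝ :=
  fun i j =>
    if h : (i : ℕ) < m then A ⟨i, h⟩ j
    else if h2 : (i : ℕ) < m + r then -(∑ l : Fin q, Z l ⟨(i : ℕ) - m, by omega⟩ * P l j)
    else 0

/-- the block matrix `H` with rows `(0, −b)`, `(Zᵀ, 0)` and `(0,…,0,1)`. -/
def Hmat {m q r : ℕ} (b : Fin m → ℝ) (Z : Matrix (Fin q) (Fin r) ℝ) :
    Matrix (Fin (m + r + 1)) (Fin (q + 1)) ℝ :=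
  fun i j =>
    if h : (i : ℕ) < m then (if (j : ℕ) = q then -b ⟨i, h⟩ else 0)
    else if h2 : (i : ℕ) < m + r then
      (if hj : (j : ℕ) < q then Z ⟨j, hj⟩ ⟨(i : ℕ) - m, by omega⟩ else 0)
    else (if (j : ℕ) = q then 1 else 0)

/-- dual objective `D(u,w) = (w₁,…,w_{q−1}, bᵀu)`. -/
def Dmap {m q : ℕ} (b : Fin m → ℝ) (uw : (Fin m → ℝ) × (Fin q → ℝ)) : Fin q → ℝ :=
  fun i => if (i : ℕ) < q - 1 then uw.2 i else b ⬝ᵥ uw.1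

/-- `R* = {v : v₁ = ⋯ = v_{q−1} = 0, v_q ≥ 0}`. -/
def RstarSet (q : ℕ) (hq : 0 < q) : Set (Fin q → ℝ) :=
  {v | (∀ i : Fin q, (i : ℕ) < q - 1 → v i = 0) ∧ 0 ≤ v (lastIdx q hq)}

/-- dual feasible set `T`. -/
def Tset {m n q r : ℕ} (A : Matrix (Fin m) (Fin n) ℝ) (P : Matrix (Fin q) (Fin n) ℝ)
    (Z : Matrix (Fin q) (Fin r) ℝ) (cbar : Fin q → ℝ) :
    Set ((Fin m → ℝ) × (Fin q → ℝ)) :=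
  {uw | ∃ v : Fin r → ℝ, 0 ≤ v ∧ uw.2 = Z.mulVec v ∧
    Aᵀ.mulVec uw.1 = Pᵀ.mulVec uw.2 ∧ cbar ⬝ᵥ uw.2 = 1 ∧ 0 ≤ uw.1}

/-- `φ(y,w) = Σ_{i<q} y_i w_i + y_q (1 − Σ_{i<q} c̄_i w_i) − w_q`. -/
def phiFn {q : ℕ} (hq : 0 < q) (cbar : Fin q → ℝ) (y w : Fin q → ℝ) : ℝ :=
  (∑ i : Fin q, if (i : ℕ) < q - 1 then y i * w i else 0)
    + y (lastIdx q hq) * (1 - ∑ i : Fin q, if (i : ℕ) < q - 1 then cbar i * w i else 0)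
    - w (lastIdx q hq)

/-- duality map `Ψ(F*) = ⋂_{w ∈ F*} {y ∈ Pset : φ(y,w) = 0}`. -/
def PsiMap {q : ℕ} (hq : 0 < q) (cbar : Fin q → ℝ) (Pset : Set (Fin q → ℝ))
    (Fstar : Set (Fin q → ℝ)) : Set (Fin q → ℝ) :=
  ⋂ w ∈ Fstar, {y ∈ Pset | phiFn hq cbar y w = 0}

/-- `My = (−y₁,…,−y_{q−1}, c̄₁y₁+⋯+c̄_{q−1}y_{q−1} − y_{q+1}, y_q)`. -/
def Mmap {q : ℕ} (hq : 0 < q) (cbar : Fin q → ℝ) (y : Fin (q + 1) → ℝ) : Fin (q + 1) → ℝ :=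
  fun i =>
    if (i : ℕ) < q - 1 then -y i
    else if (i : ℕ) = q - 1 then
      (∑ j : Fin q, if (j : ℕ) < q - 1 then cbar j * y j.castSucc else 0) - y (Fin.last q)
    else y ((lastIdx q hq).castSucc)

/-- `M⁻¹w = (−w₁,…,−w_{q−1}, w_{q+1}, −cᵀw)` where `c = (c̄,0)`. -/
def MinvMap {q : ℕ} (cbar : Fin q → ℝ) (w : Fin (q + 1) → ℝ) : Fin (q + 1) → ℝ :=
  fun i =>
    if (i : ℕ) < q - 1 then -w i
    else if (i : ℕ) = q - 1 then w (Fin.last q)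
    else -((Fin.snoc cbar 0 : Fin (q + 1) → ℝ) ⬝ᵥ w)

/-- `p*(w) = (w₁,…,w_{q−1},w_{q+1})`. -/
def pstarMap {q : ℕ} (w : Fin (q + 1) → ℝ) : Fin q → ℝ :=
  fun i => if (i : ℕ) < q - 1 then w i.castSucc else w (Fin.last q)

/-- `y` generates an extreme ray of the pointed convex cone `Q`. -/
def IsExtremeDir {E : Type*} [AddCommGroup E] [Module ℝ E] (Q : Set E) (y : E) : Prop :=
  y ∈ Q ∧ y ≠ 0 ∧ IsFaceOf (coneOf {y}) Q

/-- `σ(u,w) = (u¹, −p(w))` where `u = (u¹,u²,u³) ∈ ℝ^m×ℝ^r×ℝ`. -/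
def sigmaMap {m q r : ℕ} (uw : (Fin (m + r + 1) → ℝ) × (Fin (q + 1) → ℝ)) :
    (Fin m → ℝ) × (Fin q → ℝ) :=
  (fun i => uw.1 (Fin.castLE (by omega) i), -projq uw.2)

/-- `Δ(F̂) = F̂ + L(K)` is an inclusion-invariant bijection between the faces
of `K̂ = K ∩ L(K)^⊥` and the faces of `K`, with inverse `F ↦ F ∩ L(K)^⊥`. -/
lemma exists_orth_decomp {p : ℕ} (L : Set (Fin p → ℝ))
    (h0 : (0 : Fin p → ℝ) ∈ L)
    (hadd : ∀ x ∈ L, ∀ y ∈ L, x + y ∈ L)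
    (hsmul : ∀ (c : ℝ), ∀ x ∈ L, c • x ∈ L)
    (x : Fin p → ℝ) : ∃ a ∈ L, ∃ b ∈ orthSet L, x = a + b := by
  let S : Submodule ℝ (EuclideanSpace ℝ (Fin p)) :=
    { carrier := {v | WithLp.ofLp v ∈ L}
      add_mem' := fun ha hb => by simpa [WithLp.ofLp_add] using hadd _ ha _ hb
      zero_mem' := by simpa [WithLp.ofLp_zero] using h0
      smul_mem' := fun c y hy => by simpa [WithLp.ofLp_smul] using hsmul c _ hy }
  obtain ⟨a, ha, b, hb, hx⟩ := S.exists_add_mem_mem_orthogonal (WithLp.toLp 2 x)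
  refine ⟨WithLp.ofLp a, ha, WithLp.ofLp b, ?_, by simpa using congrArg WithLp.ofLp hx⟩
  intro z hz
  have := (Submodule.mem_orthogonal S b).mp hb (WithLp.toLp 2 z) hz
  simpa [PiLp.inner_apply, RCLike.inner_apply, dotProduct, mul_comm] using this

theorem stmt13 (p : ℕ) (K : Set (Fin p → ℝ)) (hKpoly : IsPolyhedron K) (hKcone : K = coneOf K)
    (L Khat : Set (Fin p → ℝ)) (hL : L = K ∩ -K) (hKhat : Khat = K ∩ orthSet L) :
    (∀ Fh, IsFaceOf Fh Khat → IsFaceOf (Fh + L) K) ∧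
    (∀ F, IsFaceOf F K → IsFaceOf (F ∩ orthSet L) Khat ∧ (F ∩ orthSet L) + L = F) ∧
    (∀ Fh, IsFaceOf Fh Khat → (Fh + L) ∩ orthSet L = Fh) ∧
    (∀ Fh1 Fh2, IsFaceOf Fh1 Khat → IsFaceOf Fh2 Khat → (Fh1 ⊆ Fh2 ↔ Fh1 + L ⊆ Fh2 + L)) := by
  rcases eq_empty_or_nonempty K with hKe | ⟨x0, hx0⟩
  · -- degenerate case K = ∅
    have hLe : L = ∅ := by rw [hL, hKe]; simp
    have hKhe : Khat = ∅ := by rw [hKhat, hKe]; simp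
    have hface : ∀ {F : Set (Fin p → ℝ)}, IsFaceOf F (∅ : Set (Fin p → ℝ)) → F = ∅ :=
      fun h => subset_empty_iff.mp h.2.1
    have hfe : IsFaceOf (∅ : Set (Fin p → ℝ)) ∅ :=
      ⟨convex_empty, subset_rfl, fun y hy => absurd hy (notMem_empty y)⟩
    refine ⟨?_, ?_, ?_, ?_⟩
    · intro Fh hFh
      rw [hKe]
      rw [hKhe] at hFh
      rw [hface hFh, hLe]
      simpa using hfe
    · intro F hF
      rw [hKe] at hF
      rw [hface hF, hKhe, hLe]
      constructor
      · simpa using hfe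
      · simp
    · intro Fh hFh
      rw [hKhe] at hFh
      rw [hface hFh, hLe]
      simp
    · intro Fh1 Fh2 h1 h2
      rw [hKhe] at h1 h2
      rw [hface h1, hface h2]
      simp
  · -- main case: K nonempty
    have hhull : convexHull ℝ K = K := by
      apply Subset.antisymm
      · intro x hx
        rw [hKcone]
        exact ⟨1, zero_le_one, x, hx, (one_smul ℝ x).symm⟩
      · exact subset_convexHull ℝ K
    have hconvK : Convex ℝ K := hhull ▸ convex_convexHull ℝ K
    have hsmulK : ∀ (c : ℝ), 0 ≤ c → ∀ x ∈ K, c • x ∈ K := by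
      intro c hc x hx
      rw [hKcone]
      exact ⟨c, hc, x, hhull.symm ▸ hx, rfl⟩
    have haddK : ∀ x ∈ K, ∀ y ∈ K, x + y ∈ K := by
      intro x hx y hy
      have h2 : (1/2 : ℝ) • x + (1/2 : ℝ) • y ∈ K := by
        have := hconvK hx hy (by norm_num : (0:ℝ) ≤ 1/2) (by norm_num : (0:ℝ) ≤ 1/2)
          (by norm_num)
        simpa using this
      have := hsmulK 2 (by norm_num) _ h2
      have he : (2:ℝ) • ((1/2 : ℝ) • x + (1/2 : ℝ) • y) = x + y := by module
      rwa [he] at this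
    have h0K : (0 : Fin p → ℝ) ∈ K := by
      have := hsmulK 0 le_rfl x0 hx0
      simpa using this
    have hLK : L ⊆ K := hL ▸ inter_subset_left
    have hLneg : ∀ x ∈ L, -x ∈ L := by
      intro x hx
      rw [hL] at hx ⊢
      exact ⟨by simpa using hx.2, by simpa using hx.1⟩
    have hLaddm : ∀ x ∈ L, ∀ y ∈ L, x + y ∈ L := by
      intro x hx y hy
      rw [hL] at hx hy ⊢
      refine ⟨haddK _ hx.1 _ hy.1, ?_⟩
      have hsum : -x + -y ∈ K := haddK _ (by simpa using hx.2) _ (by simpa using hy.2)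
      have he : -(x + y) = -x + -y := by abel
      rw [Set.mem_neg, he]
      exact hsum
    have hLsmulm : ∀ (c : ℝ), ∀ x ∈ L, c • x ∈ L := by
      have hnn : ∀ (c : ℝ), 0 ≤ c → ∀ x ∈ L, c • x ∈ L := by
        intro c hc x hx
        rw [hL] at hx ⊢
        refine ⟨hsmulK c hc x hx.1, ?_⟩
        have : c • (-x) ∈ K := hsmulK c hc _ (by simpa using hx.2)
        simpa using this
      intro c x hx
      rcases le_or_gt 0 c with hc | hc
      · exact hnn c hc x hx
      · have := hnn (-c) (by linarith) (-x) (hLneg x hx)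
        simpa using this
    have h0L : (0 : Fin p → ℝ) ∈ L := by
      rw [hL]; exact ⟨h0K, by simpa using h0K⟩
    have horth_zero : ∀ x ∈ L, x ∈ orthSet L → x = 0 := by
      intro x hx hox
      exact dotProduct_self_eq_zero.mp (hox x hx)
    have horth_sub : ∀ b ∈ orthSet L, ∀ b' ∈ orthSet L, b - b' ∈ orthSet L := by
      intro b hb b' hb' z hz
      simp [sub_dotProduct, hb z hz, hb' z hz]
    have horth_comb : ∀ (s t : ℝ), ∀ b ∈ orthSet L, ∀ b' ∈ orthSet L,
        s • b + t • b' ∈ orthSet L := by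
      intro s t b hb b' hb' z hz
      simp [add_dotProduct, smul_dotProduct, hb z hz, hb' z hz]
    have horthconv : Convex ℝ (orthSet L) := by
      intro x hx y hy a b _ _ _
      exact horth_comb a b x hx y hy
    have hLconv : Convex ℝ L := by
      intro x hx y hy a b _ _ _
      exact hLaddm _ (hLsmulm a x hx) _ (hLsmulm b y hy)
    have hdecomp : ∀ x : Fin p → ℝ, ∃ a ∈ L, ∃ b ∈ orthSet L, x = a + b :=
      exists_orth_decomp L h0L hLaddm hLsmulm
    have hKhatK : Khat ⊆ K := hKhat ▸ inter_subset_left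
    have hKhat_orth : Khat ⊆ orthSet L := hKhat ▸ inter_subset_right
    -- decomposition of elements of K
    have hdecompK : ∀ x ∈ K, ∃ a ∈ L, ∃ b ∈ Khat, x = a + b := by
      intro x hx
      obtain ⟨a, ha, b, hb, hab⟩ := hdecomp x
      refine ⟨a, ha, b, ?_, hab⟩
      rw [hKhat]
      refine ⟨?_, hb⟩
      have : x + -a ∈ K := haddK _ hx _ (hLK (hLneg a ha))
      have he : x + -a = b := by rw [hab]; abel
      rwa [he] at this
    -- uniqueness of decomposition
    have huniq : ∀ a ∈ L, ∀ b ∈ orthSet L, ∀ a' ∈ L, ∀ b' ∈ orthSet L,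
        a + b = a' + b' → b = b' := by
      intro a ha b hb a' ha' b' hb' h
      have h2 : b' - b = a - a' := by
        rw [sub_eq_sub_iff_add_eq_add]
        rw [h]; abel
      have h1 : b' - b ∈ L := by
        rw [h2, sub_eq_add_neg]
        exact hLaddm _ ha _ (hLneg a' ha')
      have h3 : b' - b ∈ orthSet L := horth_sub b' hb' b hb
      have h4 : b' - b = 0 := horth_zero _ h1 h3
      have := sub_eq_zero.mp h4
      exact this.symm
    -- faces of K absorb L
    have hfaceKL : ∀ F : Set (Fin p → ℝ), IsFaceOf F K → ∀ x ∈ F, ∀ l ∈ L, x + l ∈ F := by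
      intro F hF x hx l hl
      have hx1 : x + l ∈ K := haddK _ (hF.2.1 hx) _ (hLK hl)
      have hx2 : x + -l ∈ K := haddK _ (hF.2.1 hx) _ (hLK (hLneg l hl))
      have he : (1/2 : ℝ) • (x + l) + (1 - 1/2 : ℝ) • (x + -l) = x := by
        norm_num; module
      have := hF.2.2 (x + l) hx1 (x + -l) hx2 (1/2) (by norm_num) (by norm_num)
        (by rw [he]; exact hx)
      exact this.1
    refine ⟨?_, ?_, ?_, ?_⟩
    · -- statement 1
      intro Fh hFh
      obtain ⟨hFhconv, hFhsub, hFhface⟩ := hFh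
      refine ⟨hFhconv.add hLconv, ?_, ?_⟩
      · intro x hxmem
        obtain ⟨f, hf, l, hl, rfl⟩ := Set.mem_add.mp hxmem
        exact haddK _ (hKhatK (hFhsub hf)) _ (hLK hl)
      · intro y hy z hz t ht0 ht1 hmem
        obtain ⟨f, hf, l, hl, heq⟩ := Set.mem_add.mp hmem
        obtain ⟨ay, hay, by_, hbyKh, hydec⟩ := hdecompK y hy
        obtain ⟨az, haz, bz, hbzKh, hzdec⟩ := hdecompK z hz
        have hbyo : by_ ∈ orthSet L := hKhat_orth hbyKh
        have hbzo : bz ∈ orthSet L := hKhat_orth hbzKh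
        have e1 : (t • ay + (1 - t) • az) + (t • by_ + (1 - t) • bz) =
            l + f := by
          calc (t • ay + (1 - t) • az) + (t • by_ + (1 - t) • bz)
              = t • y + (1 - t) • z := by rw [hydec, hzdec]; module
            _ = l + f := by rw [← heq]; abel
        have hfF : t • by_ + (1 - t) • bz = f :=
          huniq _ (hLaddm _ (hLsmulm t ay hay) _ (hLsmulm (1 - t) az haz))
            _ (horth_comb t (1 - t) by_ hbyo bz hbzo) _ hl _
            (hKhat_orth (hFhsub hf)) e1
        have hres := hFhface by_ hbyKh bz hbzKh t ht0 ht1 (by rw [hfF]; exact hf)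
        constructor
        · exact Set.mem_add.mpr ⟨by_, hres.1, ay, hay, by rw [hydec]; abel⟩
        · exact Set.mem_add.mpr ⟨bz, hres.2, az, haz, by rw [hzdec]; abel⟩
    · -- statement 2
      intro F hF
      constructor
      · refine ⟨hF.1.inter horthconv, ?_, ?_⟩
        · intro x hx
          rw [hKhat]
          exact ⟨hF.2.1 hx.1, hx.2⟩
        · intro y hy z hz t ht0 ht1 hmem
          have hyK : y ∈ K := hKhatK hy
          have hzK : z ∈ K := hKhatK hz
          have := hF.2.2 y hyK z hzK t ht0 ht1 hmem.1
          exact ⟨⟨this.1, hKhat_orth hy⟩, ⟨this.2, hKhat_orth hz⟩⟩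
      · apply Subset.antisymm
        · intro x hxmem
          obtain ⟨f, hf, l, hl, rfl⟩ := Set.mem_add.mp hxmem
          exact hfaceKL F hF f hf.1 l hl
        · intro x hx
          obtain ⟨a, ha, b, hb, hab⟩ := hdecomp x
          have hbF : b ∈ F := by
            have : x + -a ∈ F := hfaceKL F hF x hx _ (hLneg a ha)
            have he : x + -a = b := by rw [hab]; abel
            rwa [he] at this
          exact Set.mem_add.mpr ⟨b, ⟨hbF, hb⟩, a, ha, by rw [hab]; abel⟩
    · -- statement 3
      intro Fh hFh
      apply Subset.antisymm
      · rintro x ⟨hxmem, hxo⟩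
        obtain ⟨f, hf, l, hl, heq⟩ := Set.mem_add.mp hxmem
        have hfo : f ∈ orthSet L := hKhat_orth (hFh.2.1 hf)
        have hlo : l ∈ orthSet L := by
          have : x - f ∈ orthSet L := horth_sub x hxo f hfo
          have he : x - f = l := by rw [← heq]; abel
          rwa [he] at this
        have : l = 0 := horth_zero l hl hlo
        have hxf : x = f := by rw [← heq, this]; abel
        rwa [hxf]
      · intro f hf
        refine ⟨Set.mem_add.mpr ⟨f, hf, 0, h0L, by abel⟩, hKhat_orth (hFh.2.1 hf)⟩
    · -- statement 4
      intro Fh1 Fh2 h1 h2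
      constructor
      · intro hsub
        exact Set.add_subset_add_right hsub
      · intro hsub
        have e1 : (Fh1 + L) ∩ orthSet L = Fh1 := by
          apply Subset.antisymm
          · rintro x ⟨hxmem, hxo⟩
            obtain ⟨f, hf, l, hl, heq⟩ := Set.mem_add.mp hxmem
            have hfo : f ∈ orthSet L := hKhat_orth (h1.2.1 hf)
            have hlo : l ∈ orthSet L := by
              have hsub' : x - f ∈ orthSet L := horth_sub x hxo f hfo
              have he : x - f = l := by rw [← heq]; abel
              rwa [he] at hsub'
            have hl0 : l = 0 := horth_zero l hl hlo
            have hxf : x = f := by rw [← heq, hl0]; abel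
            rwa [hxf]
          · intro f hf
            exact ⟨Set.mem_add.mpr ⟨f, hf, 0, h0L, by abel⟩, hKhat_orth (h1.2.1 hf)⟩
        have e2 : (Fh2 + L) ∩ orthSet L = Fh2 := by
          apply Subset.antisymm
          · rintro x ⟨hxmem, hxo⟩
            obtain ⟨f, hf, l, hl, heq⟩ := Set.mem_add.mp hxmem
            have hfo : f ∈ orthSet L := hKhat_orth (h2.2.1 hf)
            have hlo : l ∈ orthSet L := by
              have hsub' : x - f ∈ orthSet L := horth_sub x hxo f hfo
              have he : x - f = l := by rw [← heq]; abel
              rwa [he] at hsub'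
            have hl0 : l = 0 := horth_zero l hl hlo
            have hxf : x = f := by rw [← heq, hl0]; abel
            rwa [hxf]
          · intro f hf
            exact ⟨Set.mem_add.mpr ⟨f, hf, 0, h0L, by abel⟩, hKhat_orth (h2.2.1 hf)⟩
        calc Fh1 = (Fh1 + L) ∩ orthSet L := e1.symm
          _ ⊆ (Fh2 + L) ∩ orthSet L := inter_subset_inter_left _ hsub
          _ = Fh2 := e2
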